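/- Let μ be a Borel measure on ℝ (with the Euclidean metric) such that 0 < μ(B) < ∞ for every bounded open interval B, and let f ∈ L¹_loc(μ). Then for μ-almost every x ∈ ℝ one has lim_{r→0} sup_{B ∋ x, r(B)=r} (1/μ(B)) ∫_B |f(y) − f(x)| dμ(y) = 0, where the supremum is over all open balls B of radius r containing x; that is, μ(ℝ \ L_f) = 0. -/

import Mathlib

open MeasureTheory Metric Filter Set ENNReal

/-- The centered Hardy–Littlewood maximal function of `f` at `x`,
with respect to the measure `μ`. -/
noncomputable def centeredMaximal {X : Type*} [MeasurableSpace X] [PseudoMetricSpace X]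
    (μ : Measure X) (f : X → ℝ) (x : X) : ℝ≥0∞ :=
  ⨆ (r : ℝ) (_ : 0 < r),
    (∫⁻ y in Metric.ball x r, ENNReal.ofReal |f y| ∂μ) / μ (Metric.ball x r)

/-- The non-centered Hardy–Littlewood maximal function of `f` at `x`:
the supremum is taken over all open balls containing `x`. -/
noncomputable def noncenteredMaximal {X : Type*} [MeasurableSpace X] [PseudoMetricSpace X]
    (μ : Measure X) (f : X → ℝ) (x : X) : ℝ≥0∞ :=
  ⨆ (c : X) (r : ℝ) (_ : 0 < r) (_ : x ∈ Metric.ball c r),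
    (∫⁻ y in Metric.ball c r, ENNReal.ofReal |f y| ∂μ) / μ (Metric.ball c r)

/-- `f ∈ L¹_loc(μ)`: `∫_B |f| dμ < ∞` for every open ball `B`. -/
def LocallyIntegrableBall {X : Type*} [MeasurableSpace X] [PseudoMetricSpace X]
    (μ : Measure X) (f : X → ℝ) : Prop :=
  ∀ (c : X) (r : ℝ), 0 < r → (∫⁻ y in Metric.ball c r, ENNReal.ofReal |f y| ∂μ) < ⊤


open scoped Topology

namespace AeLebAux

attribute [local instance] Classical.propDecidable

lemma three_balls {A : Finset (ℝ × ℝ)} (hA : A.card = 3) {y : ℝ}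
    (hy : ∀ p ∈ A, y ∈ ball p.1 p.2) :
    ∃ m ∈ A, ∃ j ∈ A, ∃ k ∈ A, j ≠ m ∧ k ≠ m ∧
      ball m.1 m.2 ⊆ ball j.1 j.2 ∪ ball k.1 k.2 := by
  classical
  have hne : A.Nonempty := by rw [← Finset.card_pos, hA]; norm_num
  obtain ⟨j, hj, hjmin⟩ := A.exists_min_image (fun p => p.1 - p.2) hne
  obtain ⟨k, hk, hkmax⟩ := A.exists_max_image (fun p => p.1 + p.2) hne
  have hcard : 1 ≤ (A \ {j, k}).card := by
    have h1 := Finset.le_card_sdiff ({j, k} : Finset (ℝ × ℝ)) A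
    have h2 : ({j, k} : Finset (ℝ × ℝ)).card ≤ 2 :=
      (Finset.card_insert_le _ _).trans (by simp)
    omega
  obtain ⟨m, hm⟩ := Finset.card_pos.mp (show 0 < (A \ {j, k}).card by omega)
  have hmA : m ∈ A := (Finset.mem_sdiff.mp hm).1
  have hmjk : m ≠ j ∧ m ≠ k := by
    have := (Finset.mem_sdiff.mp hm).2
    simp only [Finset.mem_insert, Finset.mem_singleton] at this
    tauto
  refine ⟨m, hmA, j, hj, k, hk, (Ne.symm hmjk.1), (Ne.symm hmjk.2), ?_⟩
  have hyj := hy j hj; have hyk := hy k hk; have hym := hy m hmA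
  have h1 := hjmin m hmA
  have h2 := hkmax m hmA
  intro z hz
  simp only [Real.ball_eq_Ioo, mem_Ioo, mem_union] at *
  rcases lt_or_ge z (j.1 + j.2) with h | h
  · exact Or.inl ⟨by linarith, h⟩
  · exact Or.inr ⟨by linarith, by linarith⟩

lemma covering (t : Finset (ℝ × ℝ)) :
    ∃ t' : Finset (ℝ × ℝ), t' ⊆ t ∧
      (⋃ p ∈ t, ball p.1 p.2) ⊆ (⋃ p ∈ t', ball p.1 p.2) ∧
      ∀ y : ℝ, (t'.filter (fun p : ℝ × ℝ => y ∈ ball p.1 p.2)).card ≤ 2 := by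
  classical
  set S := t.powerset.filter
    (fun u => (⋃ p ∈ t, ball p.1 p.2) ⊆ ⋃ p ∈ u, ball p.1 p.2) with hS
  have htS : t ∈ S := by
    simp only [hS, Finset.mem_filter, Finset.mem_powerset]
    exact ⟨subset_rfl, subset_rfl⟩
  obtain ⟨t', ht'S, hmin⟩ := S.exists_min_image Finset.card ⟨t, htS⟩
  have ht'S' := ht'S
  rw [hS, Finset.mem_filter, Finset.mem_powerset] at ht'S'
  refine ⟨t', ht'S'.1, ht'S'.2, fun y => ?_⟩
  by_contra hcard
  push_neg at hcard
  obtain ⟨A, hAsub, hA3⟩ := Finset.exists_subset_card_eq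
    (show 3 ≤ (t'.filter (fun p : ℝ × ℝ => y ∈ ball p.1 p.2)).card from hcard)
  have hAt' : ∀ p ∈ A, p ∈ t' := fun p hp => (Finset.mem_filter.mp (hAsub hp)).1
  have hAy : ∀ p ∈ A, y ∈ ball p.1 p.2 := fun p hp =>
    (Finset.mem_filter.mp (hAsub hp)).2
  obtain ⟨m, hmA, j, hjA, k, hkA, hjm, hkm, hsub⟩ := three_balls hA3 hAy
  have hjE : j ∈ t'.erase m := Finset.mem_erase.mpr ⟨hjm, hAt' j hjA⟩
  have hkE : k ∈ t'.erase m := Finset.mem_erase.mpr ⟨hkm, hAt' k hkA⟩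
  have hcover : (⋃ p ∈ t, ball p.1 p.2) ⊆ ⋃ p ∈ t'.erase m, ball p.1 p.2 := by
    refine ht'S'.2.trans ?_
    intro z hz
    simp only [mem_iUnion, exists_prop] at hz ⊢
    obtain ⟨p, hp, hzp⟩ := hz
    by_cases hpm : p = m
    · rcases hsub (hpm ▸ hzp) with h | h
      · exact ⟨j, hjE, h⟩
      · exact ⟨k, hkE, h⟩
    · exact ⟨p, Finset.mem_erase.mpr ⟨hpm, hp⟩, hzp⟩
  have hES : t'.erase m ∈ S := by
    simp only [hS, Finset.mem_filter, Finset.mem_powerset]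
    exact ⟨(Finset.erase_subset _ _).trans ht'S'.1, hcover⟩
  have := hmin _ hES
  have hlt := Finset.card_erase_lt_of_mem (hAt' m hmA)
  omega

lemma weak_type (μ : Measure ℝ) [μ.Regular]
    (u : ℝ → ℝ≥0∞) (hu : Measurable u) (U : Set ℝ) (hUm : MeasurableSet U)
    (s : ℝ≥0∞) (hs0 : s ≠ 0) (hst : s ≠ ⊤) :
    μ (⋃ (c : ℝ) (r : ℝ) (_ : ball c r ⊆ U ∧
        s * μ (ball c r) < ∫⁻ y in ball c r, u y ∂μ), ball c r)
      ≤ 2 * (∫⁻ y in U, u y ∂μ) / s := by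
  classical
  set E := ⋃ (c : ℝ) (r : ℝ) (_ : ball c r ⊆ U ∧
      s * μ (ball c r) < ∫⁻ y in ball c r, u y ∂μ), ball c r with hE
  have hEopen : IsOpen E :=
    isOpen_iUnion fun c => isOpen_iUnion fun r => isOpen_iUnion fun _ => isOpen_ball
  rw [hEopen.measure_eq_iSup_isCompact]
  refine iSup_le fun K => iSup_le fun hKE => iSup_le fun hK => ?_
  have hx : ∀ x : K, ∃ p : ℝ × ℝ, (x : ℝ) ∈ ball p.1 p.2 ∧ ball p.1 p.2 ⊆ U ∧
      s * μ (ball p.1 p.2) < ∫⁻ y in ball p.1 p.2, u y ∂μ := by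
    rintro ⟨x, hxK⟩
    have hxE := hKE hxK
    simp only [hE, mem_iUnion, exists_prop] at hxE
    obtain ⟨c, r, ⟨h1, h2⟩, h3⟩ := hxE
    exact ⟨(c, r), h3, h1, h2⟩
  choose P hP1 hP2 hP3 using hx
  obtain ⟨I, hI⟩ := hK.elim_finite_subcover (fun x : K => ball (P x).1 (P x).2)
    (fun _ => isOpen_ball) (fun x hxK => mem_iUnion.mpr ⟨⟨x, hxK⟩, hP1 ⟨x, hxK⟩⟩)
  set t : Finset (ℝ × ℝ) := I.image P with htdef
  have hKt : K ⊆ ⋃ p ∈ t, ball p.1 p.2 := by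
    intro z hz
    obtain ⟨x, hxI, hzx⟩ := mem_iUnion₂.mp (hI hz)
    exact mem_iUnion₂.mpr ⟨P x, Finset.mem_image_of_mem P hxI, hzx⟩
  have ht : ∀ p ∈ t, ball p.1 p.2 ⊆ U ∧
      s * μ (ball p.1 p.2) < ∫⁻ y in ball p.1 p.2, u y ∂μ := by
    intro p hp
    obtain ⟨x, _, rfl⟩ := Finset.mem_image.mp hp
    exact ⟨hP2 x, hP3 x⟩
  obtain ⟨t', ht'sub, ht'cover, ht'mult⟩ := covering t
  have step1 : μ K ≤ ∑ p ∈ t', μ (ball p.1 p.2) :=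
    le_trans (measure_mono (hKt.trans ht'cover)) (measure_biUnion_finset_le _ _)
  have step2 : ∀ p ∈ t', μ (ball p.1 p.2) ≤ (∫⁻ y in ball p.1 p.2, u y ∂μ) / s := by
    intro p hp
    rw [ENNReal.le_div_iff_mul_le (Or.inl hs0) (Or.inl hst), mul_comm]
    exact (ht p (ht'sub hp)).2.le
  have step3 : ∑ p ∈ t', (∫⁻ y in ball p.1 p.2, u y ∂μ)
      ≤ 2 * ∫⁻ y in U, u y ∂μ := by
    have e1 : ∀ p ∈ t', (∫⁻ y in ball p.1 p.2, u y ∂μ)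
        = ∫⁻ y, (ball p.1 p.2).indicator u y ∂μ := fun p _ =>
      (lintegral_indicator measurableSet_ball u).symm
    rw [Finset.sum_congr rfl e1,
      ← lintegral_finset_sum t' (fun p _ => hu.indicator measurableSet_ball)]
    have ptwise : ∀ y : ℝ, (∑ p ∈ t', (ball p.1 p.2).indicator u y)
        ≤ 2 * U.indicator u y := by
      intro y
      by_cases hyU : y ∈ U
      · have e2 : ∀ p ∈ t', (ball p.1 p.2).indicator u y
            = if y ∈ ball p.1 p.2 then u y else 0 := fun p _ => rfl
        rw [Finset.sum_congr rfl e2, ← Finset.sum_filter, Finset.sum_const,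
          Set.indicator_of_mem hyU, nsmul_eq_mul]
        exact mul_le_mul_left (by exact_mod_cast ht'mult y) (u y)
      · have e3 : ∀ p ∈ t', (ball p.1 p.2).indicator u y = 0 := by
          intro p hp
          exact Set.indicator_of_notMem
            (fun hyp => hyU ((ht p (ht'sub hp)).1 hyp)) u
        rw [Finset.sum_congr rfl e3, Finset.sum_const, smul_zero]
        exact zero_le
    calc ∫⁻ y, (∑ p ∈ t', (ball p.1 p.2).indicator u y) ∂μ
        ≤ ∫⁻ y, 2 * U.indicator u y ∂μ := lintegral_mono ptwise
      _ = 2 * ∫⁻ y, U.indicator u y ∂μ := lintegral_const_mul 2 (hu.indicator hUm)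
      _ = 2 * ∫⁻ y in U, u y ∂μ := by rw [lintegral_indicator hUm]
  calc μ K ≤ ∑ p ∈ t', μ (ball p.1 p.2) := step1
    _ ≤ ∑ p ∈ t', (∫⁻ y in ball p.1 p.2, u y ∂μ) / s := Finset.sum_le_sum step2
    _ = (∑ p ∈ t', ∫⁻ y in ball p.1 p.2, u y ∂μ) / s := by
        simp only [ENNReal.div_eq_inv_mul, ← Finset.mul_sum]
    _ ≤ 2 * (∫⁻ y in U, u y ∂μ) / s := ENNReal.div_le_div_right step3 s

lemma approx (μ : Measure ℝ) [μ.Regular] (H : ℝ → ℝ) (hHm : Measurable H) (N : ℝ)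
    (hint : ∫⁻ y in ball (0:ℝ) N, ENNReal.ofReal |H y| ∂μ < ⊤)
    (η : ℝ≥0∞) (hη : η ≠ 0) :
    ∃ g : ℝ → ℝ, Continuous g ∧
      ∫⁻ y in ball (0:ℝ) N, ENNReal.ofReal |H y - g y| ∂μ ≤ η := by
  set f1 := (ball (0:ℝ) N).indicator H with hf1
  have hf1m : Measurable f1 := hHm.indicator measurableSet_ball
  have hmem : MemLp f1 1 μ := by
    refine ⟨hf1m.aestronglyMeasurable, ?_⟩
    rw [eLpNorm_one_eq_lintegral_enorm]
    have e0 : ∀ y, ‖f1 y‖ₑ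
        = (ball (0:ℝ) N).indicator (fun z => ENNReal.ofReal |H z|) y := by
      intro y
      by_cases hy : y ∈ ball (0:ℝ) N <;>
        simp [hf1, hy, Set.indicator_of_mem, Set.indicator_of_notMem,
          ← ofReal_norm_eq_enorm, Real.norm_eq_abs]
    rw [lintegral_congr e0, lintegral_indicator measurableSet_ball]
    exact hint
  obtain ⟨g, _, hg1, hgc, _⟩ := hmem.exists_hasCompactSupport_eLpNorm_sub_le
    one_ne_top hη
  refine ⟨g, hgc, ?_⟩
  have e1 : ∫⁻ y in ball (0:ℝ) N, ENNReal.ofReal |H y - g y| ∂μ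
      = ∫⁻ y in ball (0:ℝ) N, ENNReal.ofReal |f1 y - g y| ∂μ := by
    refine setLIntegral_congr_fun measurableSet_ball ?_
    intro y hy
    simp [hf1, Set.indicator_of_mem hy]
  rw [e1]
  calc ∫⁻ y in ball (0:ℝ) N, ENNReal.ofReal |f1 y - g y| ∂μ
      ≤ ∫⁻ y, ENNReal.ofReal |f1 y - g y| ∂μ := setLIntegral_le_lintegral _ _
    _ = ∫⁻ y, ‖(f1 - g) y‖ₑ ∂μ := by
        refine lintegral_congr fun y => ?_
        rw [← ofReal_norm_eq_enorm]
        simp [Real.norm_eq_abs]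
    _ = eLpNorm (f1 - g) 1 μ := (eLpNorm_one_eq_lintegral_enorm).symm
    _ ≤ η := hg1

lemma minorant (μ : Measure ℝ) (h : ℝ → ℝ≥0∞) (N : ℝ)
    (hfin : ∫⁻ y in ball (0:ℝ) N, h y ∂μ < ⊤) :
    ∃ g : ℝ → ℝ≥0∞, Measurable g ∧ (∀ y, g y ≤ h y) ∧
      ∀ s : Set ℝ, MeasurableSet s → s ⊆ ball (0:ℝ) N →
        ∫⁻ y in s, h y ∂μ = ∫⁻ y in s, g y ∂μ := by
  set ν := μ.restrict (ball (0:ℝ) N) with hν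
  obtain ⟨g, hgm, hgle, hgeq⟩ := exists_measurable_le_lintegral_eq ν h
  refine ⟨g, hgm, fun y => hgle y, fun s hs hsub => ?_⟩
  have hrs : ν.restrict s = μ.restrict s := by
    rw [hν, Measure.restrict_restrict hs, inter_eq_self_of_subset_left hsub]
  have key : ∫⁻ y in s, h y ∂ν ≤ ∫⁻ y in s, g y ∂ν := by
    have hsum0 := le_lintegral_add (μ := ν) (s.indicator h) (sᶜ.indicator h)
    have hsum : ∫⁻ y in s, h y ∂ν + ∫⁻ y in sᶜ, h y ∂ν ≤ ∫⁻ y, h y ∂ν := by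
      rw [← lintegral_indicator hs, ← lintegral_indicator hs.compl]
      exact hsum0.trans_eq
        (lintegral_congr fun y => congrFun (Set.indicator_self_add_compl s h) y)
    have hsplit : ∫⁻ y, g y ∂ν = ∫⁻ y in s, g y ∂ν + ∫⁻ y in sᶜ, g y ∂ν :=
      (lintegral_add_compl g hs).symm
    have h2 : ∫⁻ y in sᶜ, g y ∂ν ≤ ∫⁻ y in sᶜ, h y ∂ν :=
      lintegral_mono fun y => hgle y
    have hb : ∫⁻ y in sᶜ, h y ∂ν ≠ ⊤ := by
      refine ne_of_lt (lt_of_le_of_lt (setLIntegral_le_lintegral _ _) ?_)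
      calc ∫⁻ y, h y ∂ν = ∫⁻ y in ball (0:ℝ) N, h y ∂μ := rfl
        _ < ⊤ := hfin
    have hchain : ∫⁻ y in s, h y ∂ν + ∫⁻ y in sᶜ, h y ∂ν
        ≤ ∫⁻ y in s, g y ∂ν + ∫⁻ y in sᶜ, h y ∂ν := by
      calc ∫⁻ y in s, h y ∂ν + ∫⁻ y in sᶜ, h y ∂ν
          ≤ ∫⁻ y, h y ∂ν := hsum
        _ = ∫⁻ y, g y ∂ν := hgeq.symm ▸ rfl
        _ = ∫⁻ y in s, g y ∂ν + ∫⁻ y in sᶜ, g y ∂ν := hsplit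
        _ ≤ ∫⁻ y in s, g y ∂ν + ∫⁻ y in sᶜ, h y ∂ν := add_le_add_right h2 _
    exact (ENNReal.add_le_add_iff_right hb).mp hchain
  have key2 : ∫⁻ y in s, g y ∂ν ≤ ∫⁻ y in s, h y ∂ν :=
    lintegral_mono fun y => hgle y
  rw [show μ.restrict s = ν.restrict s from hrs.symm]
  exact le_antisymm key key2

lemma ofReal_inv_nat (n : ℕ) :
    ENNReal.ofReal (1 / ((n : ℝ) + 1)) = ((n : ℝ≥0∞) + 1)⁻¹ := by
  rw [one_div, ENNReal.ofReal_inv_of_pos (by positivity),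
    ENNReal.ofReal_add (by positivity) zero_le_one, ENNReal.ofReal_natCast,
    ENNReal.ofReal_one]

/-- Main lemma for measurable functions: a.e. upper bound for small noncentered averages. -/
lemma ae_upper (μ : Measure ℝ)
    (hμ : ∀ (c r : ℝ), 0 < r → 0 < μ (ball c r) ∧ μ (ball c r) < ⊤)
    (H : ℝ → ℝ) (hHm : Measurable H)
    (hint : ∀ (c r : ℝ), 0 < r → ∫⁻ y in ball c r, ENNReal.ofReal |H y| ∂μ < ⊤) :
    ∀ᵐ x ∂μ, ∀ ε : ℝ≥0∞, 0 < ε → ∀ᶠ r in 𝓝[>] (0:ℝ),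
      (⨆ (c : ℝ) (_ : x ∈ ball c r),
        (∫⁻ y in ball c r, ENNReal.ofReal (H y) ∂μ) / μ (ball c r))
      ≤ ENNReal.ofReal (H x) + ε := by
  haveI : IsLocallyFiniteMeasure μ :=
    ⟨fun x => ⟨ball x 1, ball_mem_nhds x one_pos, (hμ x 1 one_pos).2⟩⟩
  set A : ℝ → ℝ → ℝ≥0∞ := fun x r => ⨆ (c : ℝ) (_ : x ∈ ball c r),
    (∫⁻ y in ball c r, ENNReal.ofReal (H y) ∂μ) / μ (ball c r) with hA
  have main : ∀ (N : ℕ) (k : ℕ), ∀ᵐ x ∂μ, x ∈ ball (0:ℝ) (N:ℝ) →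
      ∀ᶠ r in 𝓝[>] (0:ℝ),
        A x r ≤ ENNReal.ofReal (H x) + ENNReal.ofReal (1 / ((k:ℝ) + 1)) := by
    intro N k
    set εR : ℝ := 1 / ((k:ℝ) + 1) with hεR
    have hεRpos : 0 < εR := by positivity
    set s : ℝ≥0∞ := ENNReal.ofReal (εR / 4) with hs
    have hs0 : s ≠ 0 := (ENNReal.ofReal_pos.mpr (by positivity)).ne'
    have hstop : s ≠ ⊤ := ENNReal.ofReal_ne_top
    set U : Set ℝ := ball (0:ℝ) ((N:ℝ) + 3) with hU
    set Bad : Set ℝ := {x | x ∈ ball (0:ℝ) (N:ℝ) ∧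
      ¬ ∀ᶠ r in 𝓝[>] (0:ℝ), A x r ≤ ENNReal.ofReal (H x) + ENNReal.ofReal εR} with hBad
    suffices hBadnull : μ Bad = 0 by
      rw [ae_iff]
      refine measure_mono_null (fun x hx => ?_) hBadnull
      simp only [mem_setOf_eq, Classical.not_imp] at hx
      exact hx
    have key : ∀ δ : ℝ≥0∞, 0 < δ → μ Bad ≤ δ := by
      intro δ hδ
      set m : ℝ≥0∞ := min δ 1 with hm
      have hm0 : m ≠ 0 := by
        simp only [hm, ne_eq, min_eq_iff]
        rintro (⟨h, -⟩ | ⟨h, -⟩) <;> simp_all [hδ.ne']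
      set η : ℝ≥0∞ := s * m / 4 with hη
      have hη0 : η ≠ 0 := by
        rw [hη]
        refine (ENNReal.div_pos (mul_ne_zero hs0 hm0) (by norm_num)).ne'
      obtain ⟨g, hgc, hgint⟩ := approx μ H hHm ((N:ℝ) + 3)
        (hint 0 ((N:ℝ) + 3) (by positivity)) η hη0
      set u : ℝ → ℝ≥0∞ := fun y => ENNReal.ofReal |H y - g y| with hu
      have hum : Measurable u := (hHm.sub hgc.measurable).abs.ennreal_ofReal
      set E : Set ℝ := ⋃ (c : ℝ) (r : ℝ) (_ : ball c r ⊆ U ∧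
        s * μ (ball c r) < ∫⁻ y in ball c r, u y ∂μ), ball c r with hE
      have hEb : μ E ≤ 2 * (∫⁻ y in U, u y ∂μ) / s :=
        weak_type μ u hum U measurableSet_ball s hs0 hstop
      set F : Set ℝ := {x | s ≤ u x} ∩ U with hF
      have hFb : μ F ≤ η / s := by
        rw [ENNReal.le_div_iff_mul_le (Or.inl hs0) (Or.inl hstop)]
        have hmk := mul_meas_ge_le_lintegral₀ (μ := μ.restrict U) hum.aemeasurable s
        rw [Measure.restrict_apply (measurableSet_le measurable_const hum)] at hmk
        calc μ F * s = s * μ ({x | s ≤ u x} ∩ U) := by rw [mul_comm, hF]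
          _ ≤ ∫⁻ y in U, u y ∂μ := hmk
          _ ≤ η := hgint
      have hsubBad : Bad ⊆ E ∪ F := by
        intro x hx
        by_contra hxEF
        have hxE : x ∉ E := fun h => hxEF (Or.inl h)
        have hxF : x ∉ F := fun h => hxEF (Or.inr h)
        obtain ⟨hxB, hxnot⟩ := hx
        apply hxnot
        set δr : ℝ := εR / 2 with hδr
        obtain ⟨ρ, hρpos, hρ⟩ := Metric.continuous_iff.mp hgc x δr (by positivity)
        have hmem : Ioo (0:ℝ) (min 1 (ρ/2)) ∈ 𝓝[>] (0:ℝ) :=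
          Ioo_mem_nhdsGT_of_mem ⟨le_rfl, by positivity⟩
        filter_upwards [hmem] with r hr
        obtain ⟨hr0, hrlt⟩ := hr
        refine iSup_le fun c => iSup_le fun hc => ?_
        set B : Set ℝ := ball c r with hB
        have hBx : ∀ y ∈ B, dist y x < 2 * r := by
          intro y hy
          have h1 : dist y c < r := mem_ball.mp hy
          have h2 : dist c x < r := by
            rw [dist_comm]; exact mem_ball.mp hc
          calc dist y x ≤ dist y c + dist c x := dist_triangle _ _ _
            _ < 2 * r := by linarith
        have hBU : B ⊆ U := by
          intro y hy
          have h1 := hBx y hy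
          have h2 : dist x 0 < (N:ℝ) := mem_ball.mp hxB
          have h3 : r < 1 := lt_of_lt_of_le hrlt (min_le_left _ _)
          rw [hU, mem_ball]
          calc dist y 0 ≤ dist y x + dist x 0 := dist_triangle _ _ _
            _ < (N:ℝ) + 3 := by linarith
        have hgB : ∀ y ∈ B, g y < g x + δr := by
          intro y hy
          have h1 : dist y x < ρ := by
            have := hBx y hy
            have h3 : r < ρ / 2 := lt_of_lt_of_le hrlt (min_le_right _ _)
            linarith
          have := hρ y h1
          rw [Real.dist_eq] at this
          rcases abs_lt.mp this with ⟨h2, h3⟩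
          linarith
        have hEint : ∫⁻ y in B, u y ∂μ ≤ s * μ B := by
          by_contra hlt
          push_neg at hlt
          exact hxE (mem_iUnion.mpr ⟨c, mem_iUnion.mpr ⟨r,
            mem_iUnion.mpr ⟨⟨hBU, hlt⟩, hc⟩⟩⟩)
        have hux : u x < s := by
          by_contra hge
          push_neg at hge
          exact hxF ⟨hge, ball_subset_ball (by linarith) hxB⟩
        have hpt : ∀ y ∈ B, ENNReal.ofReal (H y)
            ≤ u y + ENNReal.ofReal (g x + δr) := by
          intro y hy
          have h1 : H y ≤ |H y - g y| + (g x + δr) := by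
            have h2 := hgB y hy
            have h3 : H y - g y ≤ |H y - g y| := le_abs_self _
            linarith
          calc ENNReal.ofReal (H y)
              ≤ ENNReal.ofReal (|H y - g y| + (g x + δr)) :=
                ENNReal.ofReal_le_ofReal h1
            _ ≤ u y + ENNReal.ofReal (g x + δr) := ENNReal.ofReal_add_le
        set κ : ℝ≥0∞ := ENNReal.ofReal (g x + δr) with hκ
        have hIB : ∫⁻ y in B, ENNReal.ofReal (H y) ∂μ ≤ (s + κ) * μ B := by
          calc ∫⁻ y in B, ENNReal.ofReal (H y) ∂μ
              ≤ ∫⁻ y in B, (u y + κ) ∂μ := setLIntegral_mono' measurableSet_ball hpt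
            _ = ∫⁻ y in B, u y ∂μ + κ * μ B := by
                rw [lintegral_add_right _ measurable_const, setLIntegral_const]
            _ ≤ s * μ B + κ * μ B := add_le_add_left hEint _
            _ = (s + κ) * μ B := (add_mul _ _ _).symm
        have hμB := hμ c r hr0
        have hdiv : (∫⁻ y in B, ENNReal.ofReal (H y) ∂μ) / μ B ≤ s + κ := by
          calc (∫⁻ y in B, ENNReal.ofReal (H y) ∂μ) / μ B
              ≤ ((s + κ) * μ B) / μ B := ENNReal.div_le_div_right hIB _
            _ = (s + κ) * (μ B / μ B) := by rw [mul_div_assoc]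
            _ = s + κ := by rw [ENNReal.div_self hμB.1.ne' hμB.2.ne, mul_one]
        refine hdiv.trans ?_
        have hκle : κ ≤ ENNReal.ofReal (H x) + u x + ENNReal.ofReal δr := by
          have h1 : g x + δr ≤ (H x + |H x - g x|) + δr := by
            have h2 : g x - H x ≤ |H x - g x| := by
              rw [abs_sub_comm]; exact le_abs_self _
            linarith
          calc κ ≤ ENNReal.ofReal ((H x + |H x - g x|) + δr) :=
              ENNReal.ofReal_le_ofReal h1
            _ ≤ ENNReal.ofReal (H x + |H x - g x|) + ENNReal.ofReal δr :=
              ENNReal.ofReal_add_le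
            _ ≤ (ENNReal.ofReal (H x) + u x) + ENNReal.ofReal δr :=
              add_le_add_left ENNReal.ofReal_add_le _
        calc s + κ ≤ ENNReal.ofReal (εR/4) +
            (ENNReal.ofReal (H x) + ENNReal.ofReal (εR/4) + ENNReal.ofReal (εR/2)) := by
              refine add_le_add_right (hκle.trans ?_) s |>.trans_eq rfl
              exact add_le_add (add_le_add_right hux.le _) le_rfl
          _ = ENNReal.ofReal (H x) +
              (ENNReal.ofReal (εR/4) + ENNReal.ofReal (εR/4) + ENNReal.ofReal (εR/2)) := by
              ring
          _ = ENNReal.ofReal (H x) + ENNReal.ofReal εR := by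
              rw [← ENNReal.ofReal_add (by positivity) (by positivity),
                ← ENNReal.ofReal_add (by positivity) (by positivity),
                show εR / 4 + εR / 4 + εR / 2 = εR from by ring]
      have hEF : μ (E ∪ F) ≤ 3 * η / s := by
        calc μ (E ∪ F) ≤ μ E + μ F := measure_union_le _ _
          _ ≤ 2 * (∫⁻ y in U, u y ∂μ) / s + η / s := add_le_add hEb hFb
          _ ≤ 2 * η / s + η / s := by
              gcongr
          _ = (2 * η + η) / s := ENNReal.div_add_div_same
          _ = 3 * η / s := by ring_nf
      calc μ Bad ≤ μ (E ∪ F) := measure_mono hsubBad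
        _ ≤ 3 * η / s := hEF
        _ ≤ 4 * η / s := by gcongr <;> norm_num
        _ = (s * m) / s := by
            rw [hη, ENNReal.mul_div_cancel' (by norm_num) (by norm_num)]
        _ = m * (s / s) := by rw [mul_comm, mul_div_assoc]
        _ = m := by rw [ENNReal.div_self hs0 hstop, mul_one]
        _ ≤ δ := min_le_left _ _
    by_contra hne
    rcases eq_or_ne (μ Bad) ⊤ with htop | hfin
    · have h1 := key 1 zero_lt_one
      rw [htop] at h1
      simp at h1
    · have h2 := key (μ Bad / 2) (ENNReal.half_pos hne)
      exact absurd h2 (not_le.mpr (ENNReal.half_lt_self hne hfin))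
  have comb : ∀ᵐ x ∂μ, ∀ (N : ℕ) (k : ℕ), x ∈ ball (0:ℝ) (N:ℝ) →
      ∀ᶠ r in 𝓝[>] (0:ℝ),
        A x r ≤ ENNReal.ofReal (H x) + ENNReal.ofReal (1 / ((k:ℝ) + 1)) :=
    ae_all_iff.mpr fun N => ae_all_iff.mpr fun k => main N k
  filter_upwards [comb] with x hx ε hε
  obtain ⟨N, hN⟩ := exists_nat_gt |x|
  have hxball : x ∈ ball (0:ℝ) (N:ℝ) := by
    rw [mem_ball, Real.dist_eq, sub_zero]; exact hN
  obtain ⟨n, hn⟩ := ENNReal.exists_inv_nat_lt hε.ne'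
  have hev := hx N n hxball
  filter_upwards [hev] with r hr
  refine hr.trans (add_le_add_right ?_ _)
  rw [ofReal_inv_nat]
  calc ((n : ℝ≥0∞) + 1)⁻¹ ≤ ((n : ℝ≥0∞))⁻¹ := by
        gcongr; exact le_self_add
    _ ≤ ε := hn.le

end AeLebAux

/-- For any Borel measure `μ` on `ℝ` assigning positive finite measure to
every open ball and any `f ∈ L¹_loc(μ)`, for μ-a.e. `x` one has
`lim_{r→0} sup_{B ∋ x, r(B)=r} (1/μ(B)) ∫_B |f(y) − f(x)| dμ(y) = 0`. -/
theorem ae_lebesgue_point_real (μ : Measure ℝ)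
    (hμ : ∀ (c r : ℝ), 0 < r → 0 < μ (Metric.ball c r) ∧ μ (Metric.ball c r) < ⊤)
    (f : ℝ → ℝ) (hf : LocallyIntegrableBall μ f) :
    ∀ᵐ x ∂μ, Filter.Tendsto
      (fun r : ℝ => ⨆ (c : ℝ) (_ : x ∈ Metric.ball c r),
        (∫⁻ y in Metric.ball c r, ENNReal.ofReal |f y - f x| ∂μ) / μ (Metric.ball c r))
      (nhdsWithin 0 (Set.Ioi 0)) (nhds 0) := by
  have hint : ∀ (q : ℚ) (c r : ℝ), 0 < r →
      ∫⁻ y in ball c r, ENNReal.ofReal |f y - (q:ℝ)| ∂μ < ⊤ := by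
    intro q c r hr
    calc ∫⁻ y in ball c r, ENNReal.ofReal |f y - (q:ℝ)| ∂μ
        ≤ ∫⁻ y in ball c r, (ENNReal.ofReal |f y| + ENNReal.ofReal |(q:ℝ)|) ∂μ := by
          refine lintegral_mono fun y => ?_
          refine le_trans (ENNReal.ofReal_le_ofReal ?_) ENNReal.ofReal_add_le
          calc |f y - (q:ℝ)| = |f y + (-(q:ℝ))| := by rw [sub_eq_add_neg]
            _ ≤ |f y| + |(-(q:ℝ))| := abs_add_le _ _
            _ = |f y| + |(q:ℝ)| := by rw [abs_neg]
      _ = ∫⁻ y in ball c r, ENNReal.ofReal |f y| ∂μ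
          + ENNReal.ofReal |(q:ℝ)| * μ (ball c r) := by
          rw [lintegral_add_right _ measurable_const, setLIntegral_const]
      _ < ⊤ := by
          refine ENNReal.add_lt_top.mpr ⟨hf c r hr, ?_⟩
          exact ENNReal.mul_lt_top ofReal_lt_top (hμ c r hr).2
  have hmin : ∀ (q : ℚ) (N : ℕ), ∃ g : ℝ → ℝ≥0∞, Measurable g ∧
      (∀ y, g y ≤ ENNReal.ofReal |f y - (q:ℝ)|) ∧
      (∀ s : Set ℝ, MeasurableSet s → s ⊆ ball (0:ℝ) ((N:ℝ)+1) →
        ∫⁻ y in s, ENNReal.ofReal |f y - (q:ℝ)| ∂μ = ∫⁻ y in s, g y ∂μ) := by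
    intro q N
    exact AeLebAux.minorant μ (fun y => ENNReal.ofReal |f y - (q:ℝ)|) ((N:ℝ)+1)
      (hint q 0 _ (by positivity))
  choose G hGm hGle hGeq using hmin
  have hup : ∀ (q : ℚ) (N : ℕ), ∀ᵐ x ∂μ, ∀ ε : ℝ≥0∞, 0 < ε →
      ∀ᶠ r in 𝓝[>] (0:ℝ),
      (⨆ (c : ℝ) (_ : x ∈ ball c r),
        (∫⁻ y in ball c r, G q N y ∂μ) / μ (ball c r))
      ≤ G q N x + ε := by
    intro q N
    set R : ℝ → ℝ := fun y => (G q N y).toReal with hR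
    have hfin : ∀ y, G q N y ≠ ⊤ := fun y =>
      ne_top_of_le_ne_top ofReal_ne_top (hGle q N y)
    have hRG : ∀ y, ENNReal.ofReal (R y) = G q N y := fun y => ofReal_toReal (hfin y)
    have hRm : Measurable R := (hGm q N).ennreal_toReal
    have hRint : ∀ (c r : ℝ), 0 < r →
        ∫⁻ y in ball c r, ENNReal.ofReal |R y| ∂μ < ⊤ := by
      intro c r hr
      have e0 : ∀ y, ENNReal.ofReal |R y| = G q N y := by
        intro y; rw [abs_of_nonneg ENNReal.toReal_nonneg, hRG]
      rw [lintegral_congr fun y => e0 y]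
      calc ∫⁻ y in ball c r, G q N y ∂μ
          ≤ ∫⁻ y in ball c r, ENNReal.ofReal |f y - (q:ℝ)| ∂μ :=
            lintegral_mono fun y => hGle q N y
        _ < ⊤ := hint q c r hr
    filter_upwards [AeLebAux.ae_upper μ hμ R hRm hRint] with x hx ε hε
    have h2 := hx ε hε
    simp only [hRG] at h2
    exact h2
  have hcomb : ∀ᵐ x ∂μ, ∀ (q : ℚ) (N : ℕ), ∀ ε : ℝ≥0∞, 0 < ε →
      ∀ᶠ r in 𝓝[>] (0:ℝ),
      (⨆ (c : ℝ) (_ : x ∈ ball c r),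
        (∫⁻ y in ball c r, G q N y ∂μ) / μ (ball c r))
      ≤ G q N x + ε :=
    ae_all_iff.mpr fun q => ae_all_iff.mpr fun N => hup q N
  filter_upwards [hcomb] with x hx
  rw [ENNReal.tendsto_nhds_zero]
  intro ε hε
  obtain ⟨e, he0, hee⟩ : ∃ e : ℝ, 0 < e ∧ ENNReal.ofReal e ≤ ε := by
    rcases eq_or_ne ε ⊤ with h | h
    · exact ⟨1, one_pos, by simp [h]⟩
    · exact ⟨ε.toReal, ENNReal.toReal_pos hε.ne' h, by rw [ofReal_toReal h]⟩
  obtain ⟨q, hq⟩ := exists_rat_near (f x) (show (0:ℝ) < e/4 by positivity)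
  obtain ⟨N, hN⟩ := exists_nat_gt (|x| + 2)
  have hev := hx q N (ENNReal.ofReal (e/4)) (ENNReal.ofReal_pos.mpr (by positivity))
  have hmem : Ioo (0:ℝ) 1 ∈ 𝓝[>] (0:ℝ) := Ioo_mem_nhdsGT_of_mem ⟨le_rfl, one_pos⟩
  filter_upwards [hev, hmem] with r hr hr1
  obtain ⟨hr0, hrlt⟩ := hr1
  refine iSup_le fun c => iSup_le fun hc => ?_
  set B := ball c r with hB
  have hBsub : B ⊆ ball (0:ℝ) ((N:ℝ)+1) := by
    intro y hy
    have h1 : dist y c < r := mem_ball.mp hy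
    have h2 : dist x c < r := mem_ball.mp hc
    have h3 : dist x 0 = |x| := by rw [Real.dist_eq, sub_zero]
    rw [mem_ball]
    calc dist y 0 ≤ dist y c + dist c x + dist x 0 :=
        (dist_triangle y x 0).trans (by
          have := dist_triangle y c x
          linarith)
      _ = dist y c + dist x c + |x| := by rw [dist_comm c x, h3]
      _ < (N:ℝ) + 1 := by linarith
  have hEq := hGeq q N B measurableSet_ball hBsub
  set κ := ENNReal.ofReal |(q:ℝ) - f x| with hκ
  have hpt : ∀ y, ENNReal.ofReal |f y - f x|
      ≤ ENNReal.ofReal |f y - (q:ℝ)| + κ := by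
    intro y
    refine le_trans (ENNReal.ofReal_le_ofReal ?_) ENNReal.ofReal_add_le
    calc |f y - f x| = |(f y - (q:ℝ)) + ((q:ℝ) - f x)| := by ring_nf
      _ ≤ |f y - (q:ℝ)| + |(q:ℝ) - f x| := abs_add_le _ _
  have hμB := hμ c r hr0
  have hIB : ∫⁻ y in B, ENNReal.ofReal |f y - f x| ∂μ
      ≤ ∫⁻ y in B, G q N y ∂μ + κ * μ B := by
    calc ∫⁻ y in B, ENNReal.ofReal |f y - f x| ∂μ
        ≤ ∫⁻ y in B, (ENNReal.ofReal |f y - (q:ℝ)| + κ) ∂μ :=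
          lintegral_mono fun y => hpt y
      _ = ∫⁻ y in B, ENNReal.ofReal |f y - (q:ℝ)| ∂μ + κ * μ B := by
          rw [lintegral_add_right _ measurable_const, setLIntegral_const]
      _ = ∫⁻ y in B, G q N y ∂μ + κ * μ B := by rw [hEq]
  have hterm : (∫⁻ y in B, G q N y ∂μ) / μ B
      ≤ G q N x + ENNReal.ofReal (e/4) := by
    refine le_trans ?_ hr
    exact le_iSup_of_le c (le_iSup_of_le hc le_rfl)
  calc (∫⁻ y in B, ENNReal.ofReal |f y - f x| ∂μ) / μ B
      ≤ (∫⁻ y in B, G q N y ∂μ + κ * μ B) / μ B := ENNReal.div_le_div_right hIB _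
    _ ≤ (∫⁻ y in B, G q N y ∂μ) / μ B + κ := by
        rw [ENNReal.add_div]
        refine add_le_add_right (le_of_eq ?_) _
        rw [mul_div_assoc, ENNReal.div_self hμB.1.ne' hμB.2.ne, mul_one]
    _ ≤ (G q N x + ENNReal.ofReal (e/4)) + κ := add_le_add_left hterm _
    _ ≤ (ENNReal.ofReal (e/4) + ENNReal.ofReal (e/4)) + ENNReal.ofReal (e/4) := by
        refine add_le_add (add_le_add ?_ le_rfl) ?_
        · exact (hGle q N x).trans (ENNReal.ofReal_le_ofReal hq.le)
        · rw [hκ]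
          exact ENNReal.ofReal_le_ofReal (by rw [abs_sub_comm]; exact hq.le)
    _ ≤ ε := by
        rw [← ENNReal.ofReal_add (by positivity) (by positivity),
          ← ENNReal.ofReal_add (by positivity) (by positivity)]
        exact le_trans (ENNReal.ofReal_le_ofReal (by linarith)) hee
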